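/- Let X be a Banach space with dual X*. Let K ⊆ X* be a weak-* closed convex cone with K ∩ (-K) = {0} admitting a strictly positive functional in X, and let C ⊆ X* be a weak-* closed convex cone with -K ⊆ C and C ∩ K = {0}. Then there exists x ∈ X with ⟨κ, x⟩ > 0 for all κ ∈ K \ {0} and ⟨c, x⟩ ≤ 0 for all c ∈ C. -/

import Mathlib

open Set LinearMap

/-- Evaluation at a point, as a linear functional on the weak-* dual. -/
noncomputable def KYevalLM {X : Type*} [NormedAddCommGroup X] [NormedSpace ℝ X] (y : X) :
    WeakDual ℝ X →ₗ[ℝ] ℝ where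
  toFun φ := φ y
  map_add' _ _ := rfl
  map_smul' _ _ := rfl

/-- Every continuous linear functional on the weak-* dual is evaluation at a point
of the predual. -/
theorem KYeval {X : Type*} [NormedAddCommGroup X] [NormedSpace ℝ X]
    (f : WeakDual ℝ X →L[ℝ] ℝ) : ∃ y : X, ∀ φ : WeakDual ℝ X, f φ = φ y := by
  set p : SeminormFamily ℝ (WeakDual ℝ X) X := (topDualPairing ℝ X).toSeminormFamily with hp
  have hws : WithSeminorms p := (topDualPairing ℝ X).weakBilin_withSeminorms
  set q : Seminorm ℝ (WeakDual ℝ X) := (normSeminorm ℝ ℝ).comp f.toLinearMap with hq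
  have hqc : Continuous q := continuous_norm.comp f.continuous
  obtain ⟨s, c0, hc0, hle⟩ := Seminorm.bound_of_continuous hws q hqc
  have hker : (⨅ i : s, ker (KYevalLM (i : X))) ≤ ker f.toLinearMap := by
    intro φ hφ
    simp only [Submodule.mem_iInf, mem_ker] at hφ ⊢
    have h1 : q φ ≤ (c0 • s.sup p) φ := hle φ
    have h2 : (s.sup p) φ ≤ 0 := by
      apply Seminorm.finset_sup_apply_le le_rfl
      intro i hi
      have hzero : φ i = 0 := hφ ⟨i, hi⟩
      show ‖φ i‖ ≤ 0
      simp [hzero]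
    have h3 : (c0 • s.sup p) φ = (c0 : ℝ) * ((s.sup p) φ) := rfl
    have hq0 : 0 ≤ (s.sup p) φ := apply_nonneg _ _
    have : q φ ≤ 0 := by
      rw [h3] at h1
      have : (s.sup p) φ = 0 := le_antisymm h2 hq0
      simpa [this] using h1
    have : ‖f φ‖ ≤ 0 := this
    simpa using norm_le_zero_iff.mp this
  have hmem := mem_span_of_iInf_ker_le_ker (𝕜 := ℝ) hker
  obtain ⟨c, hc⟩ := (Submodule.mem_span_range_iff_exists_fun ℝ).mp hmem
  refine ⟨∑ i : s, c i • (i : X), fun φ => ?_⟩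
  have := congrFun (congrArg DFunLike.coe hc) φ
  simp only [LinearMap.coe_sum, Finset.sum_apply, LinearMap.smul_apply] at this
  have h2 : f φ = ∑ x : s, c x • (KYevalLM (x : X)) φ := this.symm
  rw [h2, map_sum φ]
  refine Finset.sum_congr rfl fun i _ => ?_
  rw [map_smul φ]
  rfl

/-- Separation: a point not in a weak-* closed convex cone `C` can be separated by an
element of the predual which is nonpositive on `C` and positive at the point. -/
theorem KYsep {X : Type*} [NormedAddCommGroup X] [NormedSpace ℝ X]
    (C : Set (WeakDual ℝ X)) (hC_closed : IsClosed C)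
    (hC_conv : Convex ℝ C)
    (hC_cone : ∀ (c : ℝ), 0 ≤ c → ∀ μ ∈ C, c • μ ∈ C)
    (hC0 : (0 : WeakDual ℝ X) ∈ C)
    {κ : WeakDual ℝ X} (hκ : κ ∉ C) :
    ∃ y : X, (∀ c ∈ C, c y ≤ 0) ∧ 0 < κ y := by
  haveI : LocallyConvexSpace ℝ (WeakDual ℝ X) :=
    WeakBilin.locallyConvexSpace (B := topDualPairing ℝ X)
  obtain ⟨f, u, hfu, huκ⟩ := geometric_hahn_banach_closed_point hC_conv hC_closed hκ
  have hu0 : 0 < u := by simpa using hfu 0 hC0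
  have hfC : ∀ c ∈ C, f c ≤ 0 := by
    intro c hc
    by_contra h
    push_neg at h
    have ht : (0:ℝ) ≤ u / f c := le_of_lt (div_pos hu0 h)
    have := hfu _ (hC_cone (u / f c) ht c hc)
    rw [map_smul] at this
    simp only [smul_eq_mul] at this
    rw [div_mul_cancel₀ _ (ne_of_gt h)] at this
    exact lt_irrefl u this
  obtain ⟨y, hy⟩ := KYeval f
  exact ⟨y, fun c hc => hy c ▸ hfC c hc, hy κ ▸ lt_trans hu0 huκ⟩

/-- Kreps–Yan theorem for a dual Banach space with the weak-* topology:
Let `K ⊆ X*` be a weak-* closed convex cone with `K ∩ (-K) = {0}` admitting a strictly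
positive functional in `X`, and let `C ⊆ X*` be a weak-* closed convex cone with
`-K ⊆ C` and `C ∩ K = {0}`.  Then there is `x ∈ X` with `⟨κ, x⟩ > 0` for all
`κ ∈ K \ {0}` and `⟨c, x⟩ ≤ 0` for all `c ∈ C`. -/
theorem stmt4 {X : Type*} [NormedAddCommGroup X] [NormedSpace ℝ X] [CompleteSpace X]
    (K : Set (WeakDual ℝ X)) (hK_closed : IsClosed K) (hK_conv : Convex ℝ K)
    (hK_cone : ∀ (c : ℝ), 0 ≤ c → ∀ κ ∈ K, c • κ ∈ K)
    (hK_pointed : K ∩ (-K) = {0})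
    (x₀ : X) (hx₀ : ∀ κ ∈ K, κ ≠ 0 → 0 < κ x₀)
    (C : Set (WeakDual ℝ X)) (hC_closed : IsClosed C) (hC_conv : Convex ℝ C)
    (hC_cone : ∀ (c : ℝ), 0 ≤ c → ∀ μ ∈ C, c • μ ∈ C)
    (hKC : ∀ κ ∈ K, -κ ∈ C)
    (hCK : C ∩ K = {0}) :
    ∃ x : X, (∀ κ ∈ K, κ ≠ 0 → 0 < κ x) ∧ (∀ c ∈ C, c x ≤ 0) := by
  classical
  have h0K : (0 : WeakDual ℝ X) ∈ K := by
    have h : (0 : WeakDual ℝ X) ∈ ({0} : Set (WeakDual ℝ X)) := Set.mem_singleton _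
    rw [← hK_pointed] at h
    exact h.1
  have hC0 : (0 : WeakDual ℝ X) ∈ C := by simpa using hKC 0 h0K
  have hKnotC : ∀ κ ∈ K, κ ≠ 0 → κ ∉ C := by
    intro κ hκ hne hc
    have h : κ ∈ C ∩ K := ⟨hc, hκ⟩
    rw [hCK] at h
    exact hne h
  set B : Set (WeakDual ℝ X) := {κ | κ ∈ K ∧ κ x₀ = 1} with hB
  have hBne : ∀ κ ∈ B, κ ≠ 0 := by
    rintro κ ⟨hκK, hκ1⟩ rfl
    have : (0 : WeakDual ℝ X) x₀ = 0 := rfl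
    rw [this] at hκ1
    exact zero_ne_one hκ1
  have hsep : ∀ κ : B, ∃ y : X, (∀ c ∈ C, c y ≤ 0) ∧ 0 < (κ : WeakDual ℝ X) y :=
    fun κ => KYsep C hC_closed hC_conv hC_cone hC0 (hKnotC κ κ.2.1 (hBne κ κ.2))
  choose g hg1 hg2 using hsep
  have hBclosed : IsClosed B :=
    hK_closed.inter (isClosed_eq (WeakDual.eval_continuous x₀) continuous_const)
  have hcomp : ∀ n : ℕ,
      IsCompact (B ∩ WeakDual.toStrongDual ⁻¹' Metric.closedBall 0 n) := fun n =>
    (WeakDual.isCompact_closedBall (0 : StrongDual ℝ X) n).inter_left hBclosed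
  set U : B → Set (WeakDual ℝ X) := fun κ => {μ | 0 < μ (g κ)} with hU
  have hUopen : ∀ κ : B, IsOpen (U κ) := fun κ =>
    isOpen_lt continuous_const (WeakDual.eval_continuous (g κ))
  have hcover : ∀ n : ℕ,
      (B ∩ WeakDual.toStrongDual ⁻¹' Metric.closedBall 0 n) ⊆ ⋃ κ : B, U κ := by
    intro n μ hμ
    exact Set.mem_iUnion.mpr ⟨⟨μ, hμ.1⟩, hg2 ⟨μ, hμ.1⟩⟩
  have hfin : ∀ n : ℕ, ∃ t : Finset B,
      (B ∩ WeakDual.toStrongDual ⁻¹' Metric.closedBall 0 n) ⊆ ⋃ κ ∈ t, U κ :=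
    fun n => (hcomp n).elim_finite_subcover U hUopen (hcover n)
  choose t ht using hfin
  set V : Set X := insert 0 (⋃ n : ℕ, g '' (t n : Set B)) with hV
  have hVc : V.Countable :=
    (Set.countable_iUnion (fun n => ((t n).finite_toSet.image g).countable)).insert 0
  obtain ⟨e, he⟩ := hVc.exists_eq_range ⟨0, Set.mem_insert 0 _⟩
  have hVC : ∀ y ∈ V, ∀ c ∈ C, c y ≤ 0 := by
    intro y hy c hc
    rcases hy with rfl | hy
    · simp
    · rw [Set.mem_iUnion] at hy
      obtain ⟨n, hy⟩ := hy
      obtain ⟨κ, _, rfl⟩ := hy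
      exact hg1 κ c hc
  have hVB : ∀ μ ∈ B, ∃ m : ℕ, 0 < μ (e m) := by
    intro μ hμ
    obtain ⟨n, hn⟩ := exists_nat_ge ‖WeakDual.toStrongDual μ‖
    have hμn : μ ∈ B ∩ WeakDual.toStrongDual ⁻¹' Metric.closedBall 0 n :=
      ⟨hμ, by simpa [Metric.mem_closedBall, dist_zero_right] using hn⟩
    obtain ⟨κ, hκt, hκU⟩ := Set.mem_iUnion₂.mp (ht n hμn)
    have hgV : g κ ∈ V :=
      Set.mem_insert_of_mem _ (Set.mem_iUnion.mpr ⟨n, Set.mem_image_of_mem g hκt⟩)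
    rw [he] at hgV
    obtain ⟨m, hm⟩ := hgV
    exact ⟨m, hm ▸ hκU⟩
  have heV : ∀ m : ℕ, e m ∈ V := fun m => he ▸ Set.mem_range_self m
  have hVK : ∀ κ ∈ K, ∀ m : ℕ, 0 ≤ κ (e m) := by
    intro κ hκ m
    have h := hVC (e m) (heV m) (-κ) (hKC κ hκ)
    have hneg : (-κ) (e m) = -(κ (e m)) := rfl
    rw [hneg] at h
    linarith
  set a : ℕ → ℝ := fun n => ((2:ℝ) ^ n)⁻¹ * (1 + ‖e n‖)⁻¹ with ha
  have hapos : ∀ n, 0 < a n := fun n => by positivity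
  have hgeo : Summable (fun n : ℕ => ((2:ℝ) ^ n)⁻¹) := by
    simpa [one_div, inv_pow] using summable_geometric_two
  have hsummable : Summable (fun n => a n • e n) := by
    apply Summable.of_norm
    apply Summable.of_nonneg_of_le (fun n => norm_nonneg _) (fun n => ?_) hgeo
    rw [norm_smul, Real.norm_eq_abs, abs_of_pos (hapos n)]
    have h1 : (1 + ‖e n‖)⁻¹ * ‖e n‖ ≤ 1 := by
      rw [inv_mul_le_iff₀ (by positivity)]
      linarith [norm_nonneg (e n)]
    calc a n * ‖e n‖ = ((2:ℝ)^n)⁻¹ * ((1 + ‖e n‖)⁻¹ * ‖e n‖) := by ring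
      _ ≤ ((2:ℝ)^n)⁻¹ * 1 := by
          apply mul_le_mul_of_nonneg_left h1 (by positivity)
      _ = ((2:ℝ)^n)⁻¹ := mul_one _
  set x : X := ∑' n, a n • e n with hx
  have hφsum : ∀ φ : WeakDual ℝ X, HasSum (fun n => a n * φ (e n)) (φ x) := by
    intro φ
    have h := (hsummable.hasSum).mapL (WeakDual.toStrongDual φ)
    have heq : ∀ n, (WeakDual.toStrongDual φ) (a n • e n) = a n * φ (e n) := by
      intro n
      rw [map_smul]
      rfl
    have heq2 : (WeakDual.toStrongDual φ) x = φ x := rfl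
    rw [heq2] at h
    rw [funext heq] at h
    exact h
  refine ⟨x, ?_, ?_⟩
  · intro κ hκ hne
    have hκx₀ : 0 < κ x₀ := hx₀ κ hκ hne
    have hμB : ((κ x₀)⁻¹ • κ) ∈ B := by
      refine ⟨hK_cone _ (inv_nonneg.mpr hκx₀.le) κ hκ, ?_⟩
      show (κ x₀)⁻¹ * κ x₀ = 1
      exact inv_mul_cancel₀ (ne_of_gt hκx₀)
    obtain ⟨m, hm⟩ := hVB _ hμB
    have hm' : 0 < κ (e m) := by
      have hsm : ((κ x₀)⁻¹ • κ) (e m) = (κ x₀)⁻¹ * κ (e m) := rfl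
      rw [hsm] at hm
      nlinarith [inv_pos.mpr hκx₀]
    have hle := le_hasSum (hφsum κ) m (fun j _ => mul_nonneg (hapos j).le (hVK κ hκ j))
    have hpos : 0 < a m * κ (e m) := mul_pos (hapos m) hm'
    linarith
  · intro c hc
    refine hasSum_le (fun n => ?_) (hφsum c) hasSum_zero
    have h := hVC (e n) (heV n) c hc
    have := (hapos n).le
    nlinarith
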